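/- Let n ≥ 1 and let x be an integer sequence (indexed from 1) satisfying the n-nacci recurrence x_j = x_{j-1} + x_{j-2} + ⋯ + x_{j-n} for all j > n. Then: (1) the sum of the first n terms equals the (n+1)st term, ∑_{i=1}^{n} x_i = x_{n+1}; (2) the sum of the first n+1 terms equals twice the (n+1)st term, ∑_{i=1}^{n+1} x_i = 2·x_{n+1}; and (3) the sum of the first 2n+2 terms equals four times the (2n+1)st term, ∑_{i=1}^{2n+2} x_i = 4·x_{2n+1}. -/

import Mathlib

lemma n_nacci_aux (x : ℕ → ℤ) (n j : ℕ) (h : n < j) :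
    ∑ t ∈ Finset.Icc 1 n, x (j - t) = ∑ i ∈ Finset.Icc (j - n) (j - 1), x i := by
  apply Finset.sum_nbij' (fun t => j - t) (fun i => j - i)
  · intro a ha; simp only [Finset.mem_Icc] at *; omega
  · intro a ha; simp only [Finset.mem_Icc] at *; omega
  · intro a ha; simp only [Finset.mem_Icc] at *; omega
  · intro a ha; simp only [Finset.mem_Icc] at *; omega
  · intro a ha; rfl

/-- For every n-nacci-like integer sequence (indexed from 1, each term past the
n-th being the sum of the previous n terms): the sum of the first n terms is the
(n+1)-st term, the sum of the first n+1 terms is twice the (n+1)-st term, and the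
sum of the first 2n+2 terms is four times the (2n+1)-st term. -/
theorem n_nacci_trick (n : ℕ) (hn : 1 ≤ n) (x : ℕ → ℤ)
    (hrec : ∀ j, n < j → x j = ∑ t ∈ Finset.Icc 1 n, x (j - t)) :
    (∑ i ∈ Finset.Icc 1 n, x i) = x (n + 1) ∧
    (∑ i ∈ Finset.Icc 1 (n + 1), x i) = 2 * x (n + 1) ∧
    (∑ i ∈ Finset.Icc 1 (2 * n + 2), x i) = 4 * x (2 * n + 1) := by
  have h1 : x (n + 1) = ∑ i ∈ Finset.Icc 1 n, x i := by
    rw [hrec (n + 1) (by omega), n_nacci_aux x n (n + 1) (by omega)]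
    congr 1
    · congr 1 <;> omega
  have hA : x (2 * n + 1) = ∑ i ∈ Finset.Icc (n + 1) (2 * n), x i := by
    rw [hrec (2 * n + 1) (by omega), n_nacci_aux x n (2 * n + 1) (by omega)]
    congr 1
    · congr 1 <;> omega
  have hB : x (2 * n + 2) = ∑ i ∈ Finset.Icc (n + 2) (2 * n + 1), x i := by
    rw [hrec (2 * n + 2) (by omega), n_nacci_aux x n (2 * n + 2) (by omega)]
    congr 1
    · congr 1 <;> omega
  -- ∑_{n+1}^{2n+1} = x(2n+1) + x(2n+1)
  have hIcc1 : Finset.Icc (n + 1) (2 * n + 1) = insert (2 * n + 1) (Finset.Icc (n + 1) (2 * n)) := by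
    ext a; simp only [Finset.mem_Icc, Finset.mem_insert]; omega
  have hIcc2 : Finset.Icc (n + 1) (2 * n + 1) = insert (n + 1) (Finset.Icc (n + 2) (2 * n + 1)) := by
    ext a; simp only [Finset.mem_Icc, Finset.mem_insert]; omega
  have hmid : x (n + 1) + ∑ i ∈ Finset.Icc (n + 2) (2 * n + 1), x i
      = x (2 * n + 1) + ∑ i ∈ Finset.Icc (n + 1) (2 * n), x i := by
    have e1 := Finset.sum_insert (f := x) (s := Finset.Icc (n + 1) (2 * n)) (a := 2 * n + 1)
      (by simp only [Finset.mem_Icc]; omega)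
    have e2 := Finset.sum_insert (f := x) (s := Finset.Icc (n + 2) (2 * n + 1)) (a := n + 1)
      (by simp only [Finset.mem_Icc]; omega)
    rw [← e2, ← hIcc2, hIcc1, e1]
  have hBval : x (2 * n + 2) = 2 * x (2 * n + 1) - x (n + 1) := by
    rw [hB]; omega
  have split1 : ∑ i ∈ Finset.Icc 1 (n + 1), x i
      = (∑ i ∈ Finset.Icc 1 n, x i) + x (n + 1) := by
    rw [Finset.sum_Icc_succ_top (by omega)]
  have split2 : ∑ i ∈ Finset.Icc 1 (2 * n + 2), x i
      = (∑ i ∈ Finset.Icc 1 (n + 1), x i) + (∑ i ∈ Finset.Icc (n + 2) (2 * n + 1), x i)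
        + x (2 * n + 2) := by
    rw [Finset.sum_Icc_succ_top (f := x) (a := 1) (b := 2 * n + 1) (by omega)]
    congr 1
    have hu : Finset.Icc 1 (2 * n + 1) = Finset.Icc 1 (n + 1) ∪ Finset.Icc (n + 2) (2 * n + 1) := by
      ext a; simp only [Finset.mem_Icc, Finset.mem_union]; omega
    rw [hu, Finset.sum_union]
    rw [Finset.disjoint_left]
    intro a h1 h2
    simp only [Finset.mem_Icc] at h1 h2
    omega
  refine ⟨h1.symm, ?_, ?_⟩
  · rw [split1, ← h1]; ring
  · rw [split2, split1, ← h1, hBval]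
    have : ∑ i ∈ Finset.Icc (n + 2) (2 * n + 1), x i = 2 * x (2 * n + 1) - x (n + 1) := by
      rw [← hB, hBval]
    rw [this]; ring
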